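/- In ℤ⟨X₅⟩, the additive group W₂ generated by all [x_{i₁},x_{i₂},x_{i₃},x_{i₄},x_{i₅}] and [x_{i₁},x_{i₂},x_{i₃}][x_{i₄},x_{i₅}], over permutations (i₁,...,i₅) of (1,...,5), is free abelian with basis the union of: (1) all [x₅, x_{i₁}, x_{i₂}, x_{i₃}, x_{i₄}] with {i₁,...,i₄} = {1,2,3,4}; (2) all [x_{i₁},x_{i₂},x_{i₃}][x₅,x_{i₄}] with {i₁,...,i₄} = {1,2,3,4}, i₁ > i₂ and i₁ > i₃; (3) all [x_{i₁},x_{i₂}][x₅,x_{i₃},x_{i₄}] with {i₁,...,i₄} = {1,2,3,4} and i₁ > i₂. -/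

import Mathlib

noncomputable section

/-- `ℤ⟨X₅⟩`, the free unital associative ring on `{x₁,…,x₅}` (indexed by `Fin 5`). -/
abbrev R5 : Type := FreeAlgebra ℤ (Fin 5)

/-- The commutator `[a,b] = ab - ba`. -/
def br (a b : R5) : R5 := a * b - b * a

/-- The free generators `x₁,…,x₅` (as `x 0, …, x 4`). -/
def x (i : Fin 5) : R5 := FreeAlgebra.ι ℤ i

/-- The generators `x₁,…,x₄`, embedded via `Fin 4 → Fin 5`. -/
def e (i : Fin 4) : R5 := x i.castSucc

/-- `W₂` as a `ℤ`-submodule: generated by all `[x_{i₁},x_{i₂},x_{i₃},x_{i₄},x_{i₅}]` and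
`[x_{i₁},x_{i₂},x_{i₃}][x_{i₄},x_{i₅}]` over permutations `(i₁,…,i₅)` of `(1,…,5)`. -/
def W2 : Submodule ℤ R5 := Submodule.span ℤ
  ({y | ∃ σ : Equiv.Perm (Fin 5),
      y = br (br (br (br (x (σ 0)) (x (σ 1))) (x (σ 2))) (x (σ 3))) (x (σ 4))} ∪
   {y | ∃ σ : Equiv.Perm (Fin 5),
      y = br (br (x (σ 0)) (x (σ 1))) (x (σ 2)) * br (x (σ 3)) (x (σ 4))})

/-- The index type of the claimed basis: permutations `(i₁,…,i₄)` of `(1,…,4)`, for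
family (1) unrestricted, for family (2) with `i₁ > i₂` and `i₁ > i₃`, and for
family (3) with `i₁ > i₂`. -/
abbrev Idx : Type :=
  Equiv.Perm (Fin 4) ⊕
  {σ : Equiv.Perm (Fin 4) // σ 1 < σ 0 ∧ σ 2 < σ 0} ⊕
  {σ : Equiv.Perm (Fin 4) // σ 1 < σ 0}

/-- The claimed basis elements. -/
def bElt : Idx → R5
  | Sum.inl σ => br (br (br (br (x 4) (e (σ 0))) (e (σ 1))) (e (σ 2))) (e (σ 3))
  | Sum.inr (Sum.inl σ) => br (br (e (σ.1 0)) (e (σ.1 1))) (e (σ.1 2)) * br (x 4) (e (σ.1 3))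
  | Sum.inr (Sum.inr σ) => br (e (σ.1 0)) (e (σ.1 1)) * br (br (x 4) (e (σ.1 2))) (e (σ.1 3))

-- independence machinery
abbrev AE := FreeAlgebra.equivMonoidAlgebraFreeMonoid (R := ℤ) (X := Fin 5)

def γ (w : List (Fin 5)) : R5 →ₗ[ℤ] ℤ where
  toFun r := (AE r).coeff (FreeMonoid.ofList w)
  map_add' a b := by beta_reduce; rw [map_add]; rfl
  map_smul' c a := by
    show (AE (c • a)).coeff (FreeMonoid.ofList w) = c • (AE a).coeff (FreeMonoid.ofList w)
    rw [map_smul]; rfl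

lemma equiv_x (i : Fin 5) :
    AE (x i) = MonoidAlgebra.single (FreeMonoid.of i) 1 := by
  simp [AE, FreeAlgebra.equivMonoidAlgebraFreeMonoid, x]

lemma γ_mono (w : List (Fin 5)) (i j k l m : Fin 5) :
    γ w (x i * x j * x k * x l * x m) = if w = [i, j, k, l, m] then 1 else 0 := by
  have h : AE (x i * x j * x k * x l * x m)
      = MonoidAlgebra.single (FreeMonoid.ofList [i,j,k,l,m]) 1 := by
    rw [map_mul, map_mul, map_mul, map_mul]
    simp only [equiv_x, MonoidAlgebra.single_mul_single, one_mul]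
    rfl
  show (AE (x i * x j * x k * x l * x m)).coeff (FreeMonoid.ofList w) = _
  rw [h]
  by_cases hw : w = [i,j,k,l,m]
  · subst hw; rw [if_pos rfl]; exact Finsupp.single_eq_same
  · rw [if_neg hw]
    exact Finsupp.single_eq_of_ne' (fun hcon => hw (FreeMonoid.ofList.injective hcon.symm))

@[simp] lemma cs_ne4 (i : Fin 4) : ¬ ((i.castSucc : Fin 5) = 4) := by
  simp [Fin.ext_iff]; omega

@[simp] lemma ne4_cs (i : Fin 4) : ¬ ((4 : Fin 5) = i.castSucc) := by
  simp [Fin.ext_iff]; omega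

-- expansion lemmas
lemma E1 (f a b c d : R5) : br (br (br (br f a) b) c) d =
    f*a*b*c*d - a*f*b*c*d + b*a*f*c*d - b*f*a*c*d + c*a*f*b*d - c*b*a*f*d
    + c*b*f*a*d - c*f*a*b*d + d*a*f*b*c - d*b*a*f*c + d*b*f*a*c - d*c*a*f*b
    + d*c*b*a*f - d*c*b*f*a + d*c*f*a*b - d*f*a*b*c := by
  unfold br; noncomm_ring

lemma E2 (f a b c d : R5) : br (br a b) c * br f d =
    a*b*c*f*d - a*b*c*d*f + b*a*c*d*f - b*a*c*f*d + c*a*b*d*f - c*a*b*f*d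
    - c*b*a*d*f + c*b*a*f*d := by
  unfold br; noncomm_ring

lemma E3 (f a b c d : R5) : br a b * br (br f c) d =
    a*b*d*c*f - a*b*c*f*d - a*b*d*f*c + a*b*f*c*d + b*a*c*f*d - b*a*d*c*f
    + b*a*d*f*c - b*a*f*c*d := by
  unfold br; noncomm_ring

def w1 (τ : Equiv.Perm (Fin 4)) : List (Fin 5) :=
  [4, (τ 0).castSucc, (τ 1).castSucc, (τ 2).castSucc, (τ 3).castSucc]
def w2 (τ : Equiv.Perm (Fin 4)) : List (Fin 5) :=
  [(τ 0).castSucc, (τ 1).castSucc, (τ 2).castSucc, 4, (τ 3).castSucc]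
def w3 (τ : Equiv.Perm (Fin 4)) : List (Fin 5) :=
  [(τ 0).castSucc, (τ 1).castSucc, 4, (τ 2).castSucc, (τ 3).castSucc]

lemma perm4_ext {τ τ' : Equiv.Perm (Fin 4)} (h0 : τ 0 = τ' 0) (h1 : τ 1 = τ' 1)
    (h2 : τ 2 = τ' 2) (h3 : τ 3 = τ' 3) : τ = τ' := by
  ext i
  fin_cases i
  · exact congrArg Fin.val h0
  · exact congrArg Fin.val h1
  · exact congrArg Fin.val h2
  · exact congrArg Fin.val h3

lemma c11 (τ τ' : Equiv.Perm (Fin 4)) :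
    γ (w1 τ) (bElt (Sum.inl τ')) = if τ = τ' then 1 else 0 := by
  show γ (w1 τ) (br (br (br (br (x 4) (e (τ' 0))) (e (τ' 1))) (e (τ' 2))) (e (τ' 3))) = _
  rw [E1]
  simp only [e, map_add, map_sub, map_neg, γ_mono, w1, List.cons.injEq, Fin.castSucc_inj,
    cs_ne4, ne4_cs, false_and, and_false, if_false, and_true, if_true, neg_zero, add_zero,
    zero_add, sub_zero, zero_sub, neg_neg]
  by_cases h : τ = τ'
  · subst h; simp
  · rw [if_neg h, if_neg]
    rintro ⟨-, h0, h1, h2, h3⟩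
    exact h (perm4_ext h0 h1 h2 h3)

lemma c12 (τ : Equiv.Perm (Fin 4)) (τ' : {σ : Equiv.Perm (Fin 4) // σ 1 < σ 0 ∧ σ 2 < σ 0}) :
    γ (w1 τ) (bElt (Sum.inr (Sum.inl τ'))) = 0 := by
  show γ (w1 τ)
    (br (br (e (τ'.1 0)) (e (τ'.1 1))) (e (τ'.1 2)) * br (x 4) (e (τ'.1 3))) = 0
  rw [E2]
  simp [e, γ_mono, w1, List.cons.injEq]

lemma c13 (τ : Equiv.Perm (Fin 4)) (τ' : {σ : Equiv.Perm (Fin 4) // σ 1 < σ 0}) :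
    γ (w1 τ) (bElt (Sum.inr (Sum.inr τ'))) = 0 := by
  show γ (w1 τ)
    (br (e (τ'.1 0)) (e (τ'.1 1)) * br (br (x 4) (e (τ'.1 2))) (e (τ'.1 3))) = 0
  rw [E3]
  simp [e, γ_mono, w1, List.cons.injEq]

lemma c32 (τ : {σ : Equiv.Perm (Fin 4) // σ 1 < σ 0})
    (τ' : {σ : Equiv.Perm (Fin 4) // σ 1 < σ 0 ∧ σ 2 < σ 0}) :
    γ (w3 τ.1) (bElt (Sum.inr (Sum.inl τ'))) = 0 := by
  show γ (w3 τ.1)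
    (br (br (e (τ'.1 0)) (e (τ'.1 1))) (e (τ'.1 2)) * br (x 4) (e (τ'.1 3))) = 0
  rw [E2]
  simp [e, γ_mono, w3, List.cons.injEq]

lemma c33 (τ τ' : {σ : Equiv.Perm (Fin 4) // σ 1 < σ 0}) :
    γ (w3 τ.1) (bElt (Sum.inr (Sum.inr τ'))) = if τ = τ' then 1 else 0 := by
  show γ (w3 τ.1)
    (br (e (τ'.1 0)) (e (τ'.1 1)) * br (br (x 4) (e (τ'.1 2))) (e (τ'.1 3))) = _
  rw [E3]
  simp only [e, map_add, map_sub, γ_mono, w3, List.cons.injEq, Fin.castSucc_inj, cs_ne4,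
    ne4_cs, false_and, and_false, if_false, true_and, and_true, sub_zero, zero_sub, add_zero,
    zero_add, neg_neg, neg_zero]
  have k2 : ¬(τ.1 0 = τ'.1 1 ∧ τ.1 1 = τ'.1 0 ∧ τ.1 2 = τ'.1 2 ∧ τ.1 3 = τ'.1 3) := by
    rintro ⟨h0, h1, -, -⟩
    have a := τ.2; have b := τ'.2
    rw [h0, h1] at a
    exact absurd (a.trans b) (lt_irrefl _)
  rw [if_neg k2, sub_zero]
  by_cases h : τ = τ'
  · subst h; simp
  · rw [if_neg h, if_neg]
    rintro ⟨h0, h1, h2, h3⟩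
    exact h (Subtype.ext (perm4_ext h0 h1 h2 h3))

lemma c22 (τ τ' : {σ : Equiv.Perm (Fin 4) // σ 1 < σ 0 ∧ σ 2 < σ 0}) :
    γ (w2 τ.1) (bElt (Sum.inr (Sum.inl τ'))) = if τ = τ' then 1 else 0 := by
  show γ (w2 τ.1)
    (br (br (e (τ'.1 0)) (e (τ'.1 1))) (e (τ'.1 2)) * br (x 4) (e (τ'.1 3))) = _
  rw [E2]
  simp only [e, map_add, map_sub, γ_mono, w2, List.cons.injEq, Fin.castSucc_inj, cs_ne4,
    ne4_cs, false_and, and_false, if_false, true_and, and_true, sub_zero, zero_sub, add_zero,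
    zero_add, neg_neg, neg_zero]
  have k2 : ¬(τ.1 0 = τ'.1 1 ∧ τ.1 1 = τ'.1 0 ∧ τ.1 2 = τ'.1 2 ∧ τ.1 3 = τ'.1 3) := by
    rintro ⟨h0, h1, -, -⟩
    have a := τ.2.1; have b := τ'.2.1
    rw [h0, h1] at a
    exact absurd (a.trans b) (lt_irrefl _)
  have k3 : ¬(τ.1 0 = τ'.1 2 ∧ τ.1 1 = τ'.1 0 ∧ τ.1 2 = τ'.1 1 ∧ τ.1 3 = τ'.1 3) := by
    rintro ⟨h0, h1, -, -⟩
    have a := τ.2.1; have b := τ'.2.2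
    rw [h0, h1] at a
    exact absurd (a.trans b) (lt_irrefl _)
  have k4 : ¬(τ.1 0 = τ'.1 2 ∧ τ.1 1 = τ'.1 1 ∧ τ.1 2 = τ'.1 0 ∧ τ.1 3 = τ'.1 3) := by
    rintro ⟨h0, -, h2, -⟩
    have a := τ.2.2; have b := τ'.2.2
    rw [h0, h2] at a
    exact absurd (a.trans b) (lt_irrefl _)
  rw [if_neg k2, sub_zero, if_neg k3, sub_zero, if_neg k4, add_zero]
  by_cases h : τ = τ'
  · subst h; simp
  · rw [if_neg h, if_neg]
    rintro ⟨h0, h1, h2, h3⟩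
    exact h (Subtype.ext (perm4_ext h0 h1 h2 h3))

lemma bElt_li : LinearIndependent ℤ bElt := by
  classical
  rw [Fintype.linearIndependent_iff]
  intro g hg
  have key : ∀ w : List (Fin 5), ∑ i : Idx, g i * γ w (bElt i) = 0 := by
    intro w
    have h := congrArg (γ w) hg
    rw [map_sum, map_zero] at h
    simpa only [map_smul, smul_eq_mul] using h
  have h1 : ∀ τ : Equiv.Perm (Fin 4), g (Sum.inl τ) = 0 := by
    intro τ
    have h := key (w1 τ)
    rw [Fintype.sum_sum_type, Fintype.sum_sum_type] at h
    simp only [c11, c12, c13, mul_ite, mul_one, mul_zero, Finset.sum_const_zero, add_zero,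
      Finset.sum_ite_eq, Finset.mem_univ, if_true] at h
    exact h
  have h3 : ∀ τ : {σ : Equiv.Perm (Fin 4) // σ 1 < σ 0}, g (Sum.inr (Sum.inr τ)) = 0 := by
    intro τ
    have h := key (w3 τ.1)
    rw [Fintype.sum_sum_type, Fintype.sum_sum_type] at h
    simp only [h1, zero_mul, Finset.sum_const_zero, zero_add, c32, c33, mul_ite, mul_one,
      mul_zero, add_zero, Finset.sum_ite_eq, Finset.mem_univ, if_true] at h
    exact h
  have h2 : ∀ τ : {σ : Equiv.Perm (Fin 4) // σ 1 < σ 0 ∧ σ 2 < σ 0},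
      g (Sum.inr (Sum.inl τ)) = 0 := by
    intro τ
    have h := key (w2 τ.1)
    rw [Fintype.sum_sum_type, Fintype.sum_sum_type] at h
    simp only [h1, h3, zero_mul, Finset.sum_const_zero, zero_add, add_zero, c22, mul_ite,
      mul_one, mul_zero, Finset.sum_ite_eq, Finset.mem_univ, if_true] at h
    exact h
  rintro (τ | τ | τ)
  · exact h1 τ
  · exact h2 τ
  · exact h3 τ

-- ring identities
lemma LA1 (f a b c d : R5) : br (br (br (br a f) b) c) d
    = -(br (br (br (br f a) b) c) d) := by unfold br; noncomm_ring
lemma LA2 (f a b c d : R5) : br (br (br (br a b) f) c) d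
    = -(br (br (br (br f a) b) c) d) + br (br (br (br f b) a) c) d := by
  unfold br; noncomm_ring
lemma LA3 (f a b c d : R5) : br (br (br (br a b) c) f) d
    = -(br (br (br (br f a) b) c) d) + br (br (br (br f b) a) c) d
      + br (br (br (br f c) a) b) d - br (br (br (br f c) b) a) d := by
  unfold br; noncomm_ring
lemma LA4 (f a b c d : R5) : br (br (br (br a b) c) d) f
    = -(br (br (br (br f a) b) c) d) + br (br (br (br f b) a) c) d
      + br (br (br (br f c) a) b) d - br (br (br (br f c) b) a) d
      + br (br (br (br f d) a) b) c - br (br (br (br f d) b) a) c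
      - br (br (br (br f d) c) a) b + br (br (br (br f d) c) b) a := by
  unfold br; noncomm_ring
lemma LI2 (a b c u : R5) : br (br a b) c * u = -(br (br b a) c * u) := by
  unfold br; noncomm_ring
lemma LI2c (a b c u : R5) : br (br a b) c * u = br (br c b) a * u - br (br c a) b * u := by
  unfold br; noncomm_ring
lemma LI2f (a f c u : R5) : br (br a f) c * u = -(br (br f a) c * u) := by
  unfold br; noncomm_ring
lemma LI1 (a b u : R5) : br a b * u = -(br b a * u) := by
  unfold br; noncomm_ring
lemma LIU (u c f : R5) : u * br c f = -(u * br f c) := by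
  unfold br; noncomm_ring
lemma LQD (f p q c d : R5) : br (br f p) q * br c d
    = br c d * br (br f p) q + br (br (br (br f p) q) c) d
      - br (br (br (br f p) q) d) c := by
  unfold br; noncomm_ring
lemma LPQ (f a b c d : R5) : br a b * br (br f c) d
    = br (br f c) d * br a b - br (br (br (br f c) d) a) b
      + br (br (br (br f c) d) b) a := by
  unfold br; noncomm_ring

lemma inj4' {a b c d : Fin 4} (hab : a ≠ b) (hac : a ≠ c) (had : a ≠ d)
    (hbc : b ≠ c) (hbd : b ≠ d) (hcd : c ≠ d) : Function.Injective ![a, b, c, d] := by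
  intro i j hij
  fin_cases i <;> fin_cases j <;> simp_all

lemma mem1 (a b c d : Fin 4) (hab : a ≠ b) (hac : a ≠ c) (had : a ≠ d)
    (hbc : b ≠ c) (hbd : b ≠ d) (hcd : c ≠ d) :
    br (br (br (br (x 4) (e a)) (e b)) (e c)) (e d) ∈ Submodule.span ℤ (Set.range bElt) := by
  have hinj := inj4' hab hac had hbc hbd hcd
  apply Submodule.subset_span
  refine ⟨Sum.inl (Equiv.ofBijective _ (Finite.injective_iff_bijective.mp hinj)), ?_⟩
  show br (br (br (br (x 4) (e _)) (e _)) (e _)) (e _) = _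
  simp [Equiv.ofBijective]

lemma mem2 (a b c d : Fin 4) (hab : a ≠ b) (hac : a ≠ c) (had : a ≠ d)
    (hbc : b ≠ c) (hbd : b ≠ d) (hcd : c ≠ d) (h1 : b < a) (h2 : c < a) :
    br (br (e a) (e b)) (e c) * br (x 4) (e d) ∈ Submodule.span ℤ (Set.range bElt) := by
  have hinj := inj4' hab hac had hbc hbd hcd
  apply Submodule.subset_span
  refine ⟨Sum.inr (Sum.inl ⟨Equiv.ofBijective _ (Finite.injective_iff_bijective.mp hinj),
    ?_, ?_⟩), ?_⟩
  · simpa [Equiv.ofBijective] using h1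
  · simpa [Equiv.ofBijective] using h2
  · show br (br (e _) (e _)) (e _) * br (x 4) (e _) = _
    simp [Equiv.ofBijective]

lemma mem3 (a b c d : Fin 4) (hab : a ≠ b) (hac : a ≠ c) (had : a ≠ d)
    (hbc : b ≠ c) (hbd : b ≠ d) (hcd : c ≠ d) (h1 : b < a) :
    br (e a) (e b) * br (br (x 4) (e c)) (e d) ∈ Submodule.span ℤ (Set.range bElt) := by
  have hinj := inj4' hab hac had hbc hbd hcd
  apply Submodule.subset_span
  refine ⟨Sum.inr (Sum.inr ⟨Equiv.ofBijective _ (Finite.injective_iff_bijective.mp hinj),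
    ?_⟩), ?_⟩
  · simpa [Equiv.ofBijective] using h1
  · show br (e _) (e _) * br (br (x 4) (e _)) (e _) = _
    simp [Equiv.ofBijective]

lemma mem2' (a b c d : Fin 4) (hab : a ≠ b) (hac : a ≠ c) (had : a ≠ d)
    (hbc : b ≠ c) (hbd : b ≠ d) (hcd : c ≠ d) :
    br (br (e a) (e b)) (e c) * br (x 4) (e d) ∈ Submodule.span ℤ (Set.range bElt) := by
  rcases hab.lt_or_gt with h | h
  · -- a < b
    rcases hbc.lt_or_gt with h' | h'
    · -- b < c : c is max
      rw [LI2c]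
      exact sub_mem (mem2 c b a d hbc.symm hac.symm hcd hab.symm hbd had h' (h.trans h'))
        (mem2 c a b d hac.symm hbc.symm hcd hab had hbd (h.trans h') h')
    · -- c < b : b is max
      rw [LI2]
      exact neg_mem (mem2 b a c d hab.symm hbc hbd hac had hcd h h')
  · -- b < a
    rcases hac.lt_or_gt with h' | h'
    · -- a < c : c is max
      rw [LI2c]
      exact sub_mem (mem2 c b a d hbc.symm hac.symm hcd hab.symm hbd had (h.trans h') h')
        (mem2 c a b d hac.symm hbc.symm hcd hab had hbd h' (h.trans h'))
    · -- c < a : a is max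
      exact mem2 a b c d hab hac had hbc hbd hcd h h'

lemma mem3' (a b c d : Fin 4) (hab : a ≠ b) (hac : a ≠ c) (had : a ≠ d)
    (hbc : b ≠ c) (hbd : b ≠ d) (hcd : c ≠ d) :
    br (e a) (e b) * br (br (x 4) (e c)) (e d) ∈ Submodule.span ℤ (Set.range bElt) := by
  rcases hab.lt_or_gt with h | h
  · rw [LI1]
    exact neg_mem (mem3 b a c d hab.symm hbc hbd hac had hcd h)
  · exact mem3 a b c d hab hac had hbc hbd hcd h

lemma memQD (p q c d : Fin 4) (hpq : p ≠ q) (hpc : p ≠ c) (hpd : p ≠ d)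
    (hqc : q ≠ c) (hqd : q ≠ d) (hcd : c ≠ d) :
    br (br (x 4) (e p)) (e q) * br (e c) (e d) ∈ Submodule.span ℤ (Set.range bElt) := by
  rw [LQD]
  exact sub_mem (add_mem (mem3' c d p q hcd hpc.symm hqc.symm hpd.symm hqd.symm hpq)
      (mem1 p q c d hpq hpc hpd hqc hqd hcd))
    (mem1 p q d c hpq hpd hpc hqd hqc hcd.symm)

lemma x_eq_e (j : Fin 5) (h : (j : ℕ) < 4) : x j = e ⟨(j : ℕ), h⟩ := by
  rfl

lemma mkne {v : Fin 5 → Fin 5} (hv : Function.Injective v) {i j : Fin 5} (hij : i ≠ j)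
    {hi : (v i : ℕ) < 4} {hj : (v j : ℕ) < 4} : (⟨(v i : ℕ), hi⟩ : Fin 4) ≠ ⟨(v j : ℕ), hj⟩ := by
  intro hc
  have hval := congrArg Fin.val hc
  exact hij (hv (Fin.ext hval))

lemma master1 (v : Fin 5 → Fin 5) (hv : Function.Injective v) :
    br (br (br (br (x (v 0)) (x (v 1))) (x (v 2))) (x (v 3))) (x (v 4))
      ∈ Submodule.span ℤ (Set.range bElt) := by
  obtain ⟨p, hp⟩ := (Finite.injective_iff_surjective.mp hv) 4
  have hlt : ∀ i : Fin 5, i ≠ p → (v i : ℕ) < 4 := by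
    intro i hi
    have h4 : v i ≠ 4 := by rw [← hp]; exact fun hc => hi (hv hc)
    have h5 := (v i).isLt
    have h4' : (v i : ℕ) ≠ 4 := fun hc => h4 (Fin.ext hc)
    omega
  fin_cases p
  · rw [show x (v 0) = x 4 from congrArg x hp,
      x_eq_e (v 1) (hlt 1 (by decide)), x_eq_e (v 2) (hlt 2 (by decide)),
      x_eq_e (v 3) (hlt 3 (by decide)), x_eq_e (v 4) (hlt 4 (by decide))]
    refine mem1 _ _ _ _ ?_ ?_ ?_ ?_ ?_ ?_ <;> exact mkne hv (by decide)
  · rw [show x (v 1) = x 4 from congrArg x hp,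
      x_eq_e (v 0) (hlt 0 (by decide)), x_eq_e (v 2) (hlt 2 (by decide)),
      x_eq_e (v 3) (hlt 3 (by decide)), x_eq_e (v 4) (hlt 4 (by decide)), LA1]
    refine neg_mem ?_
    refine mem1 _ _ _ _ ?_ ?_ ?_ ?_ ?_ ?_ <;> exact mkne hv (by decide)
  · rw [show x (v 2) = x 4 from congrArg x hp,
      x_eq_e (v 0) (hlt 0 (by decide)), x_eq_e (v 1) (hlt 1 (by decide)),
      x_eq_e (v 3) (hlt 3 (by decide)), x_eq_e (v 4) (hlt 4 (by decide)), LA2]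
    refine add_mem (neg_mem ?_) ?_ <;>
      (refine mem1 _ _ _ _ ?_ ?_ ?_ ?_ ?_ ?_ <;> exact mkne hv (by decide))
  · rw [show x (v 3) = x 4 from congrArg x hp,
      x_eq_e (v 0) (hlt 0 (by decide)), x_eq_e (v 1) (hlt 1 (by decide)),
      x_eq_e (v 2) (hlt 2 (by decide)), x_eq_e (v 4) (hlt 4 (by decide)), LA3]
    refine sub_mem (add_mem (add_mem (neg_mem ?_) ?_) ?_) ?_ <;>
      (refine mem1 _ _ _ _ ?_ ?_ ?_ ?_ ?_ ?_ <;> exact mkne hv (by decide))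
  · rw [show x (v 4) = x 4 from congrArg x hp,
      x_eq_e (v 0) (hlt 0 (by decide)), x_eq_e (v 1) (hlt 1 (by decide)),
      x_eq_e (v 2) (hlt 2 (by decide)), x_eq_e (v 3) (hlt 3 (by decide)), LA4]
    refine add_mem (sub_mem (sub_mem (add_mem (sub_mem (add_mem (add_mem (neg_mem ?_) ?_) ?_)
      ?_) ?_) ?_) ?_) ?_ <;>
      (refine mem1 _ _ _ _ ?_ ?_ ?_ ?_ ?_ ?_ <;> exact mkne hv (by decide))

lemma master2 (v : Fin 5 → Fin 5) (hv : Function.Injective v) :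
    br (br (x (v 0)) (x (v 1))) (x (v 2)) * br (x (v 3)) (x (v 4))
      ∈ Submodule.span ℤ (Set.range bElt) := by
  obtain ⟨p, hp⟩ := (Finite.injective_iff_surjective.mp hv) 4
  have hlt : ∀ i : Fin 5, i ≠ p → (v i : ℕ) < 4 := by
    intro i hi
    have h4 : v i ≠ 4 := by rw [← hp]; exact fun hc => hi (hv hc)
    have h5 := (v i).isLt
    have h4' : (v i : ℕ) ≠ 4 := fun hc => h4 (Fin.ext hc)
    omega
  fin_cases p
  · rw [show x (v 0) = x 4 from congrArg x hp,
      x_eq_e (v 1) (hlt 1 (by decide)), x_eq_e (v 2) (hlt 2 (by decide)),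
      x_eq_e (v 3) (hlt 3 (by decide)), x_eq_e (v 4) (hlt 4 (by decide))]
    refine memQD _ _ _ _ ?_ ?_ ?_ ?_ ?_ ?_ <;> exact mkne hv (by decide)
  · rw [show x (v 1) = x 4 from congrArg x hp,
      x_eq_e (v 0) (hlt 0 (by decide)), x_eq_e (v 2) (hlt 2 (by decide)),
      x_eq_e (v 3) (hlt 3 (by decide)), x_eq_e (v 4) (hlt 4 (by decide)), LI2f]
    refine neg_mem ?_
    refine memQD _ _ _ _ ?_ ?_ ?_ ?_ ?_ ?_ <;> exact mkne hv (by decide)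
  · rw [show x (v 2) = x 4 from congrArg x hp,
      x_eq_e (v 0) (hlt 0 (by decide)), x_eq_e (v 1) (hlt 1 (by decide)),
      x_eq_e (v 3) (hlt 3 (by decide)), x_eq_e (v 4) (hlt 4 (by decide)), LI2c]
    refine sub_mem ?_ ?_ <;>
      (refine memQD _ _ _ _ ?_ ?_ ?_ ?_ ?_ ?_ <;> exact mkne hv (by decide))
  · rw [show x (v 3) = x 4 from congrArg x hp,
      x_eq_e (v 0) (hlt 0 (by decide)), x_eq_e (v 1) (hlt 1 (by decide)),
      x_eq_e (v 2) (hlt 2 (by decide)), x_eq_e (v 4) (hlt 4 (by decide))]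
    refine mem2' _ _ _ _ ?_ ?_ ?_ ?_ ?_ ?_ <;> exact mkne hv (by decide)
  · rw [show x (v 4) = x 4 from congrArg x hp,
      x_eq_e (v 0) (hlt 0 (by decide)), x_eq_e (v 1) (hlt 1 (by decide)),
      x_eq_e (v 2) (hlt 2 (by decide)), x_eq_e (v 3) (hlt 3 (by decide)), LIU]
    refine neg_mem ?_
    refine mem2' _ _ _ _ ?_ ?_ ?_ ?_ ?_ ?_ <;> exact mkne hv (by decide)

lemma inj5 {a b c d f : Fin 5} (h1 : a ≠ b) (h2 : a ≠ c) (h3 : a ≠ d) (h4 : a ≠ f)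
    (h5 : b ≠ c) (h6 : b ≠ d) (h7 : b ≠ f) (h8 : c ≠ d) (h9 : c ≠ f) (h10 : d ≠ f) :
    Function.Injective ![a, b, c, d, f] := by
  intro i j hij
  fin_cases i <;> fin_cases j <;> simp_all

lemma genW1 (v0 v1 v2 v3 v4 : Fin 5) (h : Function.Injective ![v0, v1, v2, v3, v4]) :
    br (br (br (br (x v0) (x v1)) (x v2)) (x v3)) (x v4) ∈ W2 := by
  apply Submodule.subset_span
  refine Or.inl ⟨Equiv.ofBijective _ (Finite.injective_iff_bijective.mp h), ?_⟩
  simp [Equiv.ofBijective]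

lemma genW2 (v0 v1 v2 v3 v4 : Fin 5) (h : Function.Injective ![v0, v1, v2, v3, v4]) :
    br (br (x v0) (x v1)) (x v2) * br (x v3) (x v4) ∈ W2 := by
  apply Submodule.subset_span
  refine Or.inr ⟨Equiv.ofBijective _ (Finite.injective_iff_bijective.mp h), ?_⟩
  simp [Equiv.ofBijective]

lemma ne4cs (i : Fin 4) : (4 : Fin 5) ≠ i.castSucc := ne4_cs i
lemma csne4 (i : Fin 4) : (i.castSucc : Fin 5) ≠ 4 := cs_ne4 i
lemma csne {τ : Equiv.Perm (Fin 4)} {i j : Fin 4} (h : i ≠ j) :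
    ((τ i).castSucc : Fin 5) ≠ (τ j).castSucc :=
  fun hc => h (τ.injective (Fin.castSucc_inj.mp hc))

lemma belt_mem_W2 : ∀ i : Idx, bElt i ∈ W2 := by
  rintro (τ | τ | τ)
  · show br (br (br (br (x 4) (e (τ 0))) (e (τ 1))) (e (τ 2))) (e (τ 3)) ∈ W2
    exact genW1 4 (τ 0).castSucc (τ 1).castSucc (τ 2).castSucc (τ 3).castSucc
      (inj5 (ne4cs _) (ne4cs _) (ne4cs _) (ne4cs _) (csne (by decide)) (csne (by decide))
        (csne (by decide)) (csne (by decide)) (csne (by decide)) (csne (by decide)))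
  · show br (br (e (τ.1 0)) (e (τ.1 1))) (e (τ.1 2)) * br (x 4) (e (τ.1 3)) ∈ W2
    exact genW2 (τ.1 0).castSucc (τ.1 1).castSucc (τ.1 2).castSucc 4 (τ.1 3).castSucc
      (inj5 (csne (by decide)) (csne (by decide)) (csne4 _) (csne (by decide))
        (csne (by decide)) (csne4 _) (csne (by decide)) (csne4 _) (csne (by decide))
        (ne4cs _))
  · show br (e (τ.1 0)) (e (τ.1 1)) * br (br (x 4) (e (τ.1 2))) (e (τ.1 3)) ∈ W2
    rw [LPQ]
    refine add_mem (sub_mem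
        (genW2 4 (τ.1 2).castSucc (τ.1 3).castSucc (τ.1 0).castSucc (τ.1 1).castSucc
          (inj5 (ne4cs _) (ne4cs _) (ne4cs _) (ne4cs _) (csne (by decide)) (csne (by decide))
            (csne (by decide)) (csne (by decide)) (csne (by decide)) (csne (by decide))))
        (genW1 4 (τ.1 2).castSucc (τ.1 3).castSucc (τ.1 0).castSucc (τ.1 1).castSucc
          (inj5 (ne4cs _) (ne4cs _) (ne4cs _) (ne4cs _) (csne (by decide)) (csne (by decide))
            (csne (by decide)) (csne (by decide)) (csne (by decide)) (csne (by decide)))))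
      (genW1 4 (τ.1 2).castSucc (τ.1 3).castSucc (τ.1 1).castSucc (τ.1 0).castSucc
        (inj5 (ne4cs _) (ne4cs _) (ne4cs _) (ne4cs _) (csne (by decide)) (csne (by decide))
          (csne (by decide)) (csne (by decide)) (csne (by decide)) (csne (by decide))))

lemma span_eq : Submodule.span ℤ (Set.range bElt) = W2 := by
  apply le_antisymm
  · rw [Submodule.span_le]
    rintro y ⟨i, rfl⟩
    exact belt_mem_W2 i
  · rw [W2, Submodule.span_le]
    rintro y (⟨σ, rfl⟩ | ⟨σ, rfl⟩)
    · exact master1 σ σ.injective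
    · exact master2 σ σ.injective


/-- `W₂` is free abelian-/
theorem stmt11 :
    ∃ b : Module.Basis Idx ℤ W2, ∀ i : Idx, (b i : R5) = bElt i := by
  refine ⟨(Module.Basis.span bElt_li).map (LinearEquiv.ofEq _ _ span_eq), fun i => ?_⟩
  rw [Module.Basis.map_apply]
  rw [show ((LinearEquiv.ofEq _ _ span_eq) ((Module.Basis.span bElt_li) i) : R5)
      = ((Module.Basis.span bElt_li) i : R5) from rfl]
  exact congrArg Subtype.val (Module.Basis.span_apply bElt_li i)
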